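/- Let f be a juggling function and let a ≤ b be integers. Then st(f,a) and st(f,b) are juggling states, and Σ_{i=a+1}^{b} (f(i) − i) = (b−a)·av(f) + hght(st(f,b)) − hght(st(f,a)), where the height of a juggling state S is the (finite) sum hght(S) = Σ_{i ∈ S, i>0} i − Σ_{i ≤ 0, i ∉ S} i. -/

import Mathlib

/-- A (virtual) juggling state: a subset of ℤ whose symmetric difference with
`{i : ℤ | i ≤ 0}` is finite. -/
def IsJugglingState (S : Set ℤ) : Prop := (symmDiff S {i : ℤ | i ≤ 0}).Finite

/-- The ball number of a juggling state: |S ∩ ℤ_{>0}| − |ℤ_{≤0} ∖ S|. -/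
noncomputable def ballNumber (S : Set ℤ) : ℤ :=
  ((S ∩ {i : ℤ | 0 < i}).ncard : ℤ) - (({i : ℤ | i ≤ 0} \ S).ncard : ℤ)

/-- A (virtual) juggling function: a bijection f : ℤ → ℤ such that f(ℤ_{≤0}) is a
juggling state. -/
def IsJugglingFunction (f : ℤ → ℤ) : Prop :=
  Function.Bijective f ∧ IsJugglingState (f '' {i : ℤ | i ≤ 0})

/-- The ball number of a juggling function. -/
noncomputable def av (f : ℤ → ℤ) : ℤ := ballNumber (f '' {i : ℤ | i ≤ 0})

/-- The state of `f` at time `t`: st(f,t) = {f(i) − t : i ≤ t}. -/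
def st (f : ℤ → ℤ) (t : ℤ) : Set ℤ := (fun i => f i - t) '' {i : ℤ | i ≤ t}

/-- The height of a juggling state: Σ_{i ∈ S, i > 0} i − Σ_{i ≤ 0, i ∉ S} i. -/
noncomputable def hght (S : Set ℤ) : ℤ :=
  (∑ᶠ i ∈ S ∩ {i : ℤ | 0 < i}, i) - ∑ᶠ i ∈ {i : ℤ | i ≤ 0} \ S, i

/- ### Auxiliary lemmas -/

lemma subOne_inj : Function.Injective (fun x : ℤ => x - 1) := by
  intro a b h
  simp only at h
  omega

lemma jugg_pos_finite {S : Set ℤ} (hS : IsJugglingState S) :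
    (S ∩ {i : ℤ | 0 < i}).Finite := by
  apply hS.subset
  intro x hx
  simp only [Set.mem_inter_iff, Set.mem_setOf_eq] at hx
  rw [Set.mem_symmDiff]
  exact Or.inl ⟨hx.1, by simp only [Set.mem_setOf_eq]; omega⟩

lemma jugg_neg_finite {S : Set ℤ} (hS : IsJugglingState S) :
    ({i : ℤ | i ≤ 0} \ S).Finite := by
  apply hS.subset
  intro x hx
  rw [Set.mem_symmDiff]
  exact Or.inr ⟨hx.1, hx.2⟩

lemma sum_shift (A : Set ℤ) (hA : A.Finite) :
    ∑ᶠ j ∈ (fun x : ℤ => x - 1) '' A, j = (∑ᶠ i ∈ A, i) - A.ncard := by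
  rw [finsum_mem_image (fun x _ y _ h => subOne_inj h)]
  rw [finsum_mem_eq_finite_toFinset_sum _ hA, finsum_mem_eq_finite_toFinset_sum _ hA]
  rw [Finset.sum_sub_distrib, Finset.sum_const, ← Set.ncard_eq_toFinset_card A hA]
  simp

lemma shift_juggling (S : Set ℤ) (hS : IsJugglingState S) :
    IsJugglingState ((fun x : ℤ => x - 1) '' S) := by
  have him : (fun x : ℤ => x - 1) '' {i : ℤ | i ≤ 1} = {i : ℤ | i ≤ 0} := by
    ext x
    simp only [Set.mem_image, Set.mem_setOf_eq]
    constructor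
    · rintro ⟨a, ha, rfl⟩; omega
    · intro h; exact ⟨x + 1, by omega, by omega⟩
  unfold IsJugglingState
  rw [← him, ← Set.image_symmDiff subOne_inj]
  apply Set.Finite.image
  apply (hS.union (Set.finite_singleton 1)).subset
  intro x hx
  simp only [Set.mem_symmDiff, Set.mem_setOf_eq] at hx
  simp only [Set.mem_union, Set.mem_symmDiff, Set.mem_setOf_eq, Set.mem_singleton_iff]
  rcases hx with ⟨hxS, hx1⟩ | ⟨hx1, hxS⟩
  · exact Or.inl (Or.inl ⟨hxS, by omega⟩)
  · by_cases h0 : x ≤ 0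
    · exact Or.inl (Or.inr ⟨h0, hxS⟩)
    · exact Or.inr (by omega)

lemma shift_spec (S : Set ℤ) (hS : IsJugglingState S) :
    ballNumber ((fun x : ℤ => x - 1) '' S) = ballNumber S - 1 ∧
    hght ((fun x : ℤ => x - 1) '' S) = hght S - ballNumber S := by
  have hPos := jugg_pos_finite hS
  have hNeg := jugg_neg_finite hS
  have hP : (S ∩ {i : ℤ | 1 < i}).Finite := by
    apply hPos.subset
    intro x hx
    simp only [Set.mem_inter_iff, Set.mem_setOf_eq] at *
    exact ⟨hx.1, by omega⟩
  have hN' : ({i : ℤ | i ≤ 1} \ S).Finite := by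
    apply (hNeg.union (Set.finite_singleton 1)).subset
    intro x hx
    simp only [Set.mem_diff, Set.mem_setOf_eq] at hx
    simp only [Set.mem_union, Set.mem_diff, Set.mem_setOf_eq, Set.mem_singleton_iff]
    by_cases h0 : x ≤ 0
    · exact Or.inl ⟨h0, hx.2⟩
    · exact Or.inr (by omega)
  have claim1 : ((fun x : ℤ => x - 1) '' S) ∩ {i : ℤ | 0 < i}
      = (fun x : ℤ => x - 1) '' (S ∩ {i : ℤ | 1 < i}) := by
    ext x
    simp only [Set.mem_inter_iff, Set.mem_image, Set.mem_setOf_eq]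
    constructor
    · rintro ⟨⟨s, hs, rfl⟩, hx⟩; exact ⟨s, ⟨hs, by omega⟩, rfl⟩
    · rintro ⟨s, ⟨hs, h1⟩, rfl⟩; exact ⟨⟨s, hs, rfl⟩, by omega⟩
  have claim2 : {i : ℤ | i ≤ 0} \ ((fun x : ℤ => x - 1) '' S)
      = (fun x : ℤ => x - 1) '' ({i : ℤ | i ≤ 1} \ S) := by
    ext x
    simp only [Set.mem_diff, Set.mem_image, Set.mem_setOf_eq]
    constructor
    · rintro ⟨hx0, hns⟩
      refine ⟨x + 1, ⟨by omega, fun hmem => hns ⟨x + 1, hmem, by omega⟩⟩, by omega⟩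
    · rintro ⟨s, ⟨hs1, hsS⟩, rfl⟩
      refine ⟨by omega, ?_⟩
      rintro ⟨u, hu, he⟩
      have : u = s := by omega
      exact hsS (this ▸ hu)
  have hcard1 : ((fun x : ℤ => x - 1) '' (S ∩ {i : ℤ | 1 < i})).ncard
      = (S ∩ {i : ℤ | 1 < i}).ncard := Set.ncard_image_of_injective _ subOne_inj
  have hcard2 : ((fun x : ℤ => x - 1) '' ({i : ℤ | i ≤ 1} \ S)).ncard
      = ({i : ℤ | i ≤ 1} \ S).ncard := Set.ncard_image_of_injective _ subOne_inj
  by_cases h1 : (1 : ℤ) ∈ S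
  · have e1 : S ∩ {i : ℤ | 0 < i} = insert 1 (S ∩ {i : ℤ | 1 < i}) := by
      ext x
      simp only [Set.mem_inter_iff, Set.mem_setOf_eq, Set.mem_insert_iff]
      constructor
      · rintro ⟨hxS, hx0⟩
        by_cases hx1 : x = 1
        · exact Or.inl hx1
        · exact Or.inr ⟨hxS, by omega⟩
      · rintro (rfl | ⟨hxS, hx⟩)
        · exact ⟨h1, by omega⟩
        · exact ⟨hxS, by omega⟩
    have e2 : {i : ℤ | i ≤ 1} \ S = {i : ℤ | i ≤ 0} \ S := by
      ext x
      simp only [Set.mem_diff, Set.mem_setOf_eq]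
      constructor
      · rintro ⟨hx1, hxS⟩
        refine ⟨?_, hxS⟩
        by_contra h
        have : x = 1 := by omega
        exact hxS (this ▸ h1)
      · rintro ⟨hx0, hxS⟩; exact ⟨by omega, hxS⟩
    have hmem : (1 : ℤ) ∉ S ∩ {i : ℤ | 1 < i} := by
      intro h
      simp only [Set.mem_inter_iff, Set.mem_setOf_eq] at h
      omega
    have hcardpos : (S ∩ {i : ℤ | 0 < i}).ncard = (S ∩ {i : ℤ | 1 < i}).ncard + 1 := by
      rw [e1, Set.ncard_insert_of_notMem hmem hP]
    have hsumpos : ∑ᶠ i ∈ S ∩ {i : ℤ | 0 < i}, i = 1 + ∑ᶠ i ∈ S ∩ {i : ℤ | 1 < i}, i := by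
      rw [e1, finsum_mem_insert (fun i => i) hmem hP]
    constructor
    · unfold ballNumber
      rw [claim1, claim2, hcard1, hcard2, e2, hcardpos]
      push_cast
      ring
    · unfold hght ballNumber
      rw [claim1, claim2, sum_shift _ hP, sum_shift _ hN', e2, hcardpos, hsumpos]
      push_cast
      ring
  · have e1 : S ∩ {i : ℤ | 0 < i} = S ∩ {i : ℤ | 1 < i} := by
      ext x
      simp only [Set.mem_inter_iff, Set.mem_setOf_eq]
      constructor
      · rintro ⟨hxS, hx0⟩
        refine ⟨hxS, ?_⟩
        by_contra h
        have : x = 1 := by omega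
        exact h1 (this ▸ hxS)
      · rintro ⟨hxS, hx⟩; exact ⟨hxS, by omega⟩
    have e2 : {i : ℤ | i ≤ 1} \ S = insert 1 ({i : ℤ | i ≤ 0} \ S) := by
      ext x
      simp only [Set.mem_diff, Set.mem_setOf_eq, Set.mem_insert_iff]
      constructor
      · rintro ⟨hx1, hxS⟩
        by_cases hx : x = 1
        · exact Or.inl hx
        · exact Or.inr ⟨by omega, hxS⟩
      · rintro (rfl | ⟨hx0, hxS⟩)
        · exact ⟨le_refl 1, h1⟩
        · exact ⟨by omega, hxS⟩
    have hmem : (1 : ℤ) ∉ {i : ℤ | i ≤ 0} \ S := by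
      intro h
      have := h.1
      simp only [Set.mem_setOf_eq] at this
      omega
    have hcardneg : ({i : ℤ | i ≤ 1} \ S).ncard = ({i : ℤ | i ≤ 0} \ S).ncard + 1 := by
      rw [e2, Set.ncard_insert_of_notMem hmem hNeg]
    have hsumneg : ∑ᶠ i ∈ {i : ℤ | i ≤ 1} \ S, i = 1 + ∑ᶠ i ∈ {i : ℤ | i ≤ 0} \ S, i := by
      rw [e2, finsum_mem_insert (fun i => i) hmem hNeg]
    constructor
    · unfold ballNumber
      rw [claim1, claim2, hcard1, hcard2, e1, hcardneg]
      push_cast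
      ring
    · unfold hght ballNumber
      rw [claim1, claim2, sum_shift _ hP, sum_shift _ hN', e1, hcardneg, hsumneg]
      push_cast
      ring

lemma insert_spec (S : Set ℤ) (hS : IsJugglingState S) (x : ℤ) (hx : x ∉ S) :
    IsJugglingState (insert x S) ∧ ballNumber (insert x S) = ballNumber S + 1 ∧
    hght (insert x S) = hght S + x := by
  have hPos := jugg_pos_finite hS
  have hNeg := jugg_neg_finite hS
  have hjugg : IsJugglingState (insert x S) := by
    apply (hS.insert x).subset
    intro y hy
    simp only [Set.mem_symmDiff, Set.mem_insert_iff, Set.mem_setOf_eq] at hy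
    simp only [Set.mem_insert_iff, Set.mem_symmDiff, Set.mem_setOf_eq]
    rcases hy with ⟨hyS, hy0⟩ | ⟨hy0, hyS⟩
    · rcases hyS with rfl | hyS
      · exact Or.inl rfl
      · exact Or.inr (Or.inl ⟨hyS, hy0⟩)
    · exact Or.inr (Or.inr ⟨hy0, fun h => hyS (Or.inr h)⟩)
  refine ⟨hjugg, ?_⟩
  by_cases hx0 : 0 < x
  · have e1 : insert x S ∩ {i : ℤ | 0 < i} = insert x (S ∩ {i : ℤ | 0 < i}) := by
      ext y
      simp only [Set.mem_inter_iff, Set.mem_insert_iff, Set.mem_setOf_eq]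
      constructor
      · rintro ⟨rfl | hyS, hy0⟩
        · exact Or.inl rfl
        · exact Or.inr ⟨hyS, hy0⟩
      · rintro (rfl | ⟨hyS, hy0⟩)
        · exact ⟨Or.inl rfl, hx0⟩
        · exact ⟨Or.inr hyS, hy0⟩
    have e2 : {i : ℤ | i ≤ 0} \ insert x S = {i : ℤ | i ≤ 0} \ S := by
      ext y
      simp only [Set.mem_diff, Set.mem_insert_iff, Set.mem_setOf_eq]
      constructor
      · rintro ⟨hy0, hyS⟩; exact ⟨hy0, fun h => hyS (Or.inr h)⟩
      · rintro ⟨hy0, hyS⟩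
        refine ⟨hy0, ?_⟩
        rintro (rfl | h)
        · omega
        · exact hyS h
    have hmem : x ∉ S ∩ {i : ℤ | 0 < i} := fun h => hx h.1
    constructor
    · unfold ballNumber
      rw [e1, e2, Set.ncard_insert_of_notMem hmem hPos]
      push_cast
      ring
    · unfold hght
      rw [e1, e2, finsum_mem_insert (fun i => i) hmem hPos]
      ring
  · have e1 : insert x S ∩ {i : ℤ | 0 < i} = S ∩ {i : ℤ | 0 < i} := by
      ext y
      simp only [Set.mem_inter_iff, Set.mem_insert_iff, Set.mem_setOf_eq]
      constructor
      · rintro ⟨rfl | hyS, hy0⟩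
        · omega
        · exact ⟨hyS, hy0⟩
      · rintro ⟨hyS, hy0⟩; exact ⟨Or.inr hyS, hy0⟩
    have e2 : {i : ℤ | i ≤ 0} \ S = insert x ({i : ℤ | i ≤ 0} \ insert x S) := by
      ext y
      simp only [Set.mem_diff, Set.mem_insert_iff, Set.mem_setOf_eq]
      constructor
      · rintro ⟨hy0, hyS⟩
        by_cases hyx : y = x
        · exact Or.inl hyx
        · exact Or.inr ⟨hy0, fun h => by rcases h with h | h; exact hyx h; exact hyS h⟩
      · rintro (rfl | ⟨hy0, hyS⟩)
        · exact ⟨by omega, hx⟩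
        · exact ⟨hy0, fun h => hyS (Or.inr h)⟩
    have hfin2 : ({i : ℤ | i ≤ 0} \ insert x S).Finite := by
      apply hNeg.subset
      intro y hy
      exact ⟨hy.1, fun h => hy.2 (Or.inr h)⟩
    have hmem : x ∉ {i : ℤ | i ≤ 0} \ insert x S := fun h => h.2 (Or.inl rfl)
    have hcard : ({i : ℤ | i ≤ 0} \ S).ncard = ({i : ℤ | i ≤ 0} \ insert x S).ncard + 1 := by
      rw [e2, Set.ncard_insert_of_notMem hmem hfin2]
    have hsum : ∑ᶠ i ∈ {i : ℤ | i ≤ 0} \ S, i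
        = x + ∑ᶠ i ∈ {i : ℤ | i ≤ 0} \ insert x S, i := by
      rw [e2, finsum_mem_insert (fun i => i) hmem hfin2]
    constructor
    · unfold ballNumber
      rw [e1, hcard]
      push_cast
      ring
    · unfold hght
      rw [e1, hsum]
      ring

lemma st_jugg (f : ℤ → ℤ) (hf : IsJugglingFunction f) (t : ℤ) :
    IsJugglingState (st f t) := by
  have hmap : (fun x : ℤ => x - t) '' {i : ℤ | i ≤ t} = {i : ℤ | i ≤ 0} := by
    ext x
    simp only [Set.mem_image, Set.mem_setOf_eq]
    constructor
    · rintro ⟨a, ha, rfl⟩; omega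
    · intro h; exact ⟨x + t, by omega, by omega⟩
  have hinj : Function.Injective (fun x : ℤ => x - t) := by
    intro a b h; simp only at h; omega
  have hst : st f t = (fun x : ℤ => x - t) '' (f '' {i : ℤ | i ≤ t}) := by
    rw [Set.image_image]
    rfl
  unfold IsJugglingState
  rw [hst, ← hmap, ← Set.image_symmDiff hinj]
  apply Set.Finite.image
  have hA : (symmDiff (f '' {i : ℤ | i ≤ t}) (f '' {i : ℤ | i ≤ 0})).Finite := by
    rw [← Set.image_symmDiff hf.1.injective]
    apply Set.Finite.image
    apply (Set.finite_Icc (min t 0) (max t 0)).subset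
    intro x hx
    simp only [Set.mem_symmDiff, Set.mem_setOf_eq, Set.mem_Icc] at *
    omega
  have hB := hf.2
  have hC : (symmDiff ({i : ℤ | i ≤ 0}) ({i : ℤ | i ≤ t})).Finite := by
    apply (Set.finite_Icc (min t 0) (max t 0)).subset
    intro x hx
    simp only [Set.mem_symmDiff, Set.mem_setOf_eq, Set.mem_Icc] at *
    omega
  apply ((hA.union hB).union hC).subset
  intro x hx
  have h1 : x ∈ symmDiff (f '' {i : ℤ | i ≤ t}) (f '' {i : ℤ | i ≤ 0})
      ∪ symmDiff (f '' {i : ℤ | i ≤ 0}) {i : ℤ | i ≤ t} :=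
    symmDiff_triangle (f '' {i : ℤ | i ≤ t}) (f '' {i : ℤ | i ≤ 0}) {i : ℤ | i ≤ t} hx
  rcases h1 with h1 | h1
  · exact Or.inl (Or.inl h1)
  · have h2 : x ∈ symmDiff (f '' {i : ℤ | i ≤ 0}) {i : ℤ | i ≤ 0}
        ∪ symmDiff ({i : ℤ | i ≤ 0}) {i : ℤ | i ≤ t} :=
      symmDiff_triangle (f '' {i : ℤ | i ≤ 0}) {i : ℤ | i ≤ 0} {i : ℤ | i ≤ t} h1
    rcases h2 with h2 | h2
    · exact Or.inl (Or.inr h2)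
    · exact Or.inr h2

lemma st_succ (f : ℤ → ℤ) (t : ℤ) :
    st f (t + 1) = insert (f (t + 1) - (t + 1)) ((fun x : ℤ => x - 1) '' st f t) := by
  ext x
  simp only [st, Set.mem_insert_iff, Set.mem_image, Set.mem_setOf_eq]
  constructor
  · rintro ⟨i, hi, rfl⟩
    by_cases h : i = t + 1
    · subst h; exact Or.inl rfl
    · exact Or.inr ⟨f i - t, ⟨i, by omega, rfl⟩, by ring⟩
  · rintro (h | ⟨y, ⟨i, hi, rfl⟩, rfl⟩)
    · exact ⟨t + 1, le_refl _, h.symm⟩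
    · exact ⟨i, by omega, by ring⟩

lemma st_succ_not_mem (f : ℤ → ℤ) (hf : Function.Injective f) (t : ℤ) :
    f (t + 1) - (t + 1) ∉ (fun x : ℤ => x - 1) '' st f t := by
  rintro ⟨y, ⟨i, hi, rfl⟩, he⟩
  simp only [Set.mem_setOf_eq] at hi
  simp only at he
  have : f i = f (t + 1) := by omega
  have := hf this
  omega

lemma ball_st (f : ℤ → ℤ) (hf : IsJugglingFunction f) :
    ∀ t : ℤ, ballNumber (st f t) = av f := by
  have key : ∀ t : ℤ, ballNumber (st f (t + 1)) = ballNumber (st f t) := by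
    intro t
    have hjt := st_jugg f hf t
    have hjs := shift_juggling _ hjt
    have hnm := st_succ_not_mem f hf.1.injective t
    rw [st_succ f t, (insert_spec _ hjs _ hnm).2.1, (shift_spec _ hjt).1]
    ring
  have base : ballNumber (st f 0) = av f := by
    have h0 : st f 0 = f '' {i : ℤ | i ≤ 0} := by
      unfold st
      simp
    rw [h0]; rfl
  intro t
  induction t using Int.induction_on with
  | zero => exact base
  | succ n ih => rw [key (n : ℤ)]; exact ih
  | pred n ih =>
    have hk := key (-(n : ℤ) - 1)
    rw [show (-(n : ℤ) - 1 + 1) = -(n : ℤ) by ring] at hk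
    rw [← hk]
    exact ih

lemma hght_step (f : ℤ → ℤ) (hf : IsJugglingFunction f) (t : ℤ) :
    hght (st f (t + 1)) = hght (st f t) + (f (t + 1) - (t + 1)) - av f := by
  have hjt := st_jugg f hf t
  have hjs := shift_juggling _ hjt
  have hnm := st_succ_not_mem f hf.1.injective t
  rw [st_succ f t, (insert_spec _ hjs _ hnm).2.2, (shift_spec _ hjt).2, ball_st f hf t]
  ring

theorem stmt_2 (f : ℤ → ℤ) (hf : IsJugglingFunction f) (a b : ℤ) (hab : a ≤ b) :
    IsJugglingState (st f a) ∧ IsJugglingState (st f b) ∧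
    ∑ i ∈ Finset.Icc (a + 1) b, (f i - i)
      = (b - a) * av f + hght (st f b) - hght (st f a) := by
  refine ⟨st_jugg f hf a, st_jugg f hf b, ?_⟩
  have main : ∀ n : ℕ, ∑ i ∈ Finset.Icc (a + 1) (a + (n : ℤ)), (f i - i)
      = (n : ℤ) * av f + hght (st f (a + (n : ℤ))) - hght (st f a) := by
    intro n
    induction n with
    | zero =>
      rw [show a + ((0 : ℕ) : ℤ) = a by simp, Finset.Icc_eq_empty (by omega)]
      simp
    | succ n ih =>
      have hcast : a + ((n + 1 : ℕ) : ℤ) = a + (n : ℤ) + 1 := by push_cast; ring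
      have hins : Finset.Icc (a + 1) (a + (n : ℤ) + 1)
          = insert (a + (n : ℤ) + 1) (Finset.Icc (a + 1) (a + (n : ℤ))) := by
        ext x
        simp only [Finset.mem_Icc, Finset.mem_insert]
        omega
      rw [hcast, hins, Finset.sum_insert (by simp only [Finset.mem_Icc]; omega), ih,
        hght_step f hf (a + (n : ℤ))]
      push_cast
      ring
  have hn : b = a + ((b - a).toNat : ℤ) := by
    rw [Int.toNat_of_nonneg (by omega)]; ring
  have := main (b - a).toNat
  rw [Int.toNat_of_nonneg (by omega)] at this
  rw [show a + (b - a) = b by ring] at this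
  exact this
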